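/- arXiv:1405.4376 — 2 statements merged into one kernel-verified Lean document; each statement's English description precedes it below -/
import Mathlib

section
/- Let n ≥ 2, let u be a unit vector of ℝ^n, R = { x ∈ ℝ^n : ⟨x, u⟩ = 0 }, and let D ⊆ R be compact convex with nonempty interior relative to R. Call K ⊆ ℝ^n a convex cap based on D (in direction u) if K is compact, convex, with nonempty interior, K ⊆ { x : ⟨x, u⟩ ≥ 0 }, K ∩ R = D, and for every x in the relative boundary of D inside R the line { x + t·u : t ∈ ℝ } meets K only at the point x. If C₀ and C₁ are convex caps based on D with C₀ ≠ C₁, then for every λ ∈ (0, 1), vol((1 − λ)•C₀ + λ•C₁) > (1 − λ)·vol(C₀) + λ·vol(C₁). (The volume is strictly convex on the set of convex caps with the same base.) -/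
set_option maxHeartbeats 1600000

open scoped RealInnerProductSpace Pointwise
open MeasureTheory

/-- `K` is a convex cap based on `D` in direction `u`: `K` is compact, convex, with
nonempty interior, contained in the half-space `{⟨x, u⟩ ≥ 0}`, `K ∩ u^⊥ = D`, and for
every `x` in the relative boundary of `D` inside the hyperplane `R = u^⊥` (i.e. `x ∈ D`
but `x` is not in the interior of `D` relative to `R`) the line `{x + t·u}` meets `K`
only at the point `x`. -/
def IsConvexCap {n : ℕ} (u : EuclideanSpace ℝ (Fin n))
    (D K : Set (EuclideanSpace ℝ (Fin n))) : Prop :=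
  IsCompact K ∧ Convex ℝ K ∧ (interior K).Nonempty ∧
  K ⊆ {x : EuclideanSpace ℝ (Fin n) | 0 ≤ ⟪x, u⟫} ∧
  K ∩ {x : EuclideanSpace ℝ (Fin n) | ⟪x, u⟫ = 0} = D ∧
  ∀ x ∈ D, (¬ ∃ ε > (0 : ℝ), ∀ y : EuclideanSpace ℝ (Fin n),
      ⟪y, u⟫ = 0 → ‖y - x‖ < ε → y ∈ D) →
    ∀ t : ℝ, x + t • u ∈ K → t = 0


section Stmt15AuxSection

open Set

namespace Stmt15Aux

variable {m : ℕ}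

/-- A "cap" in the product space `ℝ × (Fin m → ℝ)` over base `B`. -/
def CapW (B : Set (Fin m → ℝ)) (K : Set (ℝ × (Fin m → ℝ))) : Prop :=
  IsCompact K ∧ Convex ℝ K ∧ (∀ p ∈ K, 0 ≤ p.1) ∧
    (∀ p ∈ K, p.1 = 0 → p.2 ∈ B) ∧ (∀ y ∈ B, ((0:ℝ), y) ∈ K) ∧
    (∀ y ∈ B, y ∉ interior B → ∀ t : ℝ, (t, y) ∈ K → t = 0)

/-- Height function of a cap. -/
noncomputable def ht (K : Set (ℝ × (Fin m → ℝ))) (y : Fin m → ℝ) : ℝ :=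
  sSup {t | (t, y) ∈ K}

lemma fiber_eq {B : Set (Fin m → ℝ)} {K : Set (ℝ × (Fin m → ℝ))}
    (hK : CapW B K) {y : Fin m → ℝ} (hy : y ∈ B) :
    {t : ℝ | (t, y) ∈ K} = Icc 0 (ht K y) := by
  obtain ⟨hcp, hcv, hpos, -, h0, -⟩ := hK
  set s : Set ℝ := {t | (t, y) ∈ K} with hs
  have hne : s.Nonempty := ⟨0, h0 y hy⟩
  have hbdd : BddAbove s := by
    obtain ⟨r, hr⟩ := hcp.isBounded.subset_closedBall 0
    exact ⟨r, fun t ht => by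
      have := hr ht
      simp only [Metric.mem_closedBall, dist_zero_right] at this
      exact le_trans (le_trans (le_abs_self t) (norm_fst_le ((t, y) : ℝ × (Fin m → ℝ)))) this⟩
  have hcl : IsClosed s := hcp.isClosed.preimage (by fun_prop :
    Continuous fun t : ℝ => ((t, y) : ℝ × (Fin m → ℝ)))
  have hconv : Convex ℝ s := by
    intro t₁ h₁ t₂ h₂ a b ha hb hab
    have : a • ((t₁, y) : ℝ × (Fin m → ℝ)) + b • (t₂, y) ∈ K := hcv h₁ h₂ ha hb hab
    exact (by simpa [Prod.smul_mk, Prod.mk_add_mk, Convex.combo_self hab] using this :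
      ((a * t₁ + b * t₂, y) : ℝ × (Fin m → ℝ)) ∈ K)
  refine Subset.antisymm (fun t htmem => ⟨hpos _ htmem, le_csSup hbdd htmem⟩) ?_
  have hsup : ht K y ∈ s := hcl.csSup_mem hne hbdd
  intro t htmem
  exact hconv.ordConnected.out (h0 y hy) hsup htmem

lemma ht_mem {B : Set (Fin m → ℝ)} {K : Set (ℝ × (Fin m → ℝ))}
    (hK : CapW B K) {y : Fin m → ℝ} (hy : y ∈ B) : (ht K y, y) ∈ K := by
  have := fiber_eq hK hy
  have : ht K y ∈ Icc 0 (ht K y) := ⟨by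
    have h0 : (0:ℝ) ∈ {t : ℝ | (t, y) ∈ K} := hK.2.2.2.2.1 y hy
    rw [this] at h0; exact le_trans h0.1 h0.2, le_rfl⟩
  have h := (fiber_eq hK hy).symm ▸ this
  exact h

lemma ht_nonneg {B : Set (Fin m → ℝ)} {K : Set (ℝ × (Fin m → ℝ))}
    (hK : CapW B K) {y : Fin m → ℝ} (hy : y ∈ B) : 0 ≤ ht K y := by
  have h0 : (0:ℝ) ∈ {t : ℝ | (t, y) ∈ K} := hK.2.2.2.2.1 y hy
  rw [fiber_eq hK hy] at h0
  exact h0.2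

lemma mem_cap_iff {B : Set (Fin m → ℝ)} {K : Set (ℝ × (Fin m → ℝ))}
    (hK : CapW B K) (hsh : ∀ p ∈ K, p.2 ∈ B) (p : ℝ × (Fin m → ℝ)) :
    p ∈ K ↔ p.2 ∈ B ∧ p.1 ∈ Icc 0 (ht K p.2) := by
  constructor
  · intro hp
    have hb := hsh p hp
    refine ⟨hb, ?_⟩
    rw [← fiber_eq hK hb]
    simpa using hp
  · rintro ⟨hb, ht⟩
    rw [← fiber_eq hK hb] at ht
    simpa using ht

lemma ht_concave {B : Set (Fin m → ℝ)} {K : Set (ℝ × (Fin m → ℝ))}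
    (hK : CapW B K) (hB : Convex ℝ B) : ConcaveOn ℝ B (ht K) := by
  refine ⟨hB, fun y hy z hz a b ha hb hab => ?_⟩
  have h1 : a • ((ht K y, y) : ℝ × (Fin m → ℝ)) + b • (ht K z, z) ∈ K :=
    hK.2.1 (ht_mem hK hy) (ht_mem hK hz) ha hb hab
  have h2 : ((a * ht K y + b * ht K z, a • y + b • z) : ℝ × (Fin m → ℝ)) ∈ K := by
    simpa [Prod.smul_mk, Prod.mk_add_mk, smul_eq_mul] using h1
  have hyz : a • y + b • z ∈ B := hB hy hz ha hb hab
  have h3 : (a * ht K y + b * ht K z) ∈ {t | (t, a • y + b • z) ∈ K} := h2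
  rw [fiber_eq hK hyz] at h3
  simpa [smul_eq_mul] using h3.2

/-- The shadow (projection on the base hyperplane) of a cap is contained in `B`. -/
lemma shadow {B : Set (Fin m → ℝ)} {K : Set (ℝ × (Fin m → ℝ))}
    (hK : CapW B K) (hBconv : Convex ℝ B) (hBcl : IsClosed B)
    {w : Fin m → ℝ} (hw : w ∈ interior B) : ∀ p ∈ K, p.2 ∈ B := by
  rintro ⟨t, y⟩ hp
  by_contra hyB
  obtain ⟨hcp, hcv, hpos, hbase, h0B, hbd⟩ := hK
  have ht0 : 0 ≤ t := hpos _ hp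
  have htpos : 0 < t := by
    rcases eq_or_lt_of_le ht0 with h | h
    · exact absurd (hbase _ hp h.symm) hyB
    · exact h
  -- the segment from `w` to `y`, find last parameter in `B`
  set A : Set ℝ := {θ | θ ∈ Icc (0:ℝ) 1 ∧ w + θ • (y - w) ∈ B} with hA
  have hAne : A.Nonempty := ⟨0, ⟨le_rfl, zero_le_one⟩, by simpa using interior_subset hw⟩
  have hAbdd : BddAbove A := ⟨1, fun θ hθ => hθ.1.2⟩
  have hAcl : IsClosed A := by
    apply IsClosed.inter isClosed_Icc
    exact hBcl.preimage (by fun_prop)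
  set θs := sSup A with hθs
  have hθsA : θs ∈ A := hAcl.csSup_mem hAne hAbdd
  have hθs1 : θs < 1 := by
    rcases eq_or_lt_of_le hθsA.1.2 with h | h
    · exfalso; apply hyB; have := hθsA.2; rw [h] at this; simpa using this
    · exact h
  set x := w + θs • (y - w) with hx
  have hxB : x ∈ B := hθsA.2
  have hxnint : x ∉ interior B := by
    intro hxint
    obtain ⟨ε, hε, hball⟩ := Metric.isOpen_iff.1 isOpen_interior x hxint
    -- for small δ > 0, θs + δ ∈ A, contradicting sSup
    have hyw : (0:ℝ) < ‖y - w‖ + 1 := by positivity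
    set δ := min ((1 - θs)/2) (ε / 2 / (‖y - w‖ + 1)) with hδ
    have hδpos : 0 < δ := by
      apply lt_min (by linarith)
      positivity
    have hmem : θs + δ ∈ A := by
      constructor
      · constructor
        · linarith [hθsA.1.1]
        · have : δ ≤ (1 - θs)/2 := min_le_left _ _
          linarith
      · apply interior_subset
        apply hball
        have : w + (θs + δ) • (y - w) - x = δ • (y - w) := by
          rw [hx]; module
        rw [Metric.mem_ball, dist_eq_norm, this, norm_smul]
        have h1 : ‖δ‖ = δ := abs_of_pos hδpos
        have h2 : δ ≤ ε / 2 / (‖y - w‖ + 1) := min_le_right _ _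
        have h3 : ‖y - w‖ < ‖y - w‖ + 1 := by linarith
        calc ‖δ‖ * ‖y - w‖ ≤ δ * (‖y - w‖ + 1) := by
              rw [h1]; nlinarith [norm_nonneg (y - w)]
          _ ≤ (ε / 2 / (‖y - w‖ + 1)) * (‖y - w‖ + 1) := by nlinarith
          _ = ε / 2 := by field_simp
          _ < ε := by linarith
    have := le_csSup hAbdd hmem
    linarith
  -- the point over x with positive height
  have hq : ((1 - θs) • ((0:ℝ), w) + θs • ((t,y) : ℝ × (Fin m → ℝ))) ∈ K :=
    hcv (h0B w (interior_subset hw)) hp (by linarith [hθsA.1.1]) hθsA.1.1 (by ring)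
  have hq' : ((θs * t, x) : ℝ × (Fin m → ℝ)) ∈ K := by
    have : (1 - θs) • ((0:ℝ), w) + θs • ((t,y) : ℝ × (Fin m → ℝ)) = (θs * t, x) := by
      rw [hx, Prod.smul_mk, Prod.smul_mk, Prod.mk_add_mk, Prod.mk.injEq]
      constructor
      · simp [smul_eq_mul]
      · module
    rwa [this] at hq
  have := hbd x hxB hxnint (θs * t) hq'
  have hθs0 : θs = 0 := by
    rcases mul_eq_zero.1 this with h | h
    · exact h
    · exact absurd h (ne_of_gt htpos)
  apply hxnint
  rw [hx, hθs0]; simpa using hw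


lemma volume_cap {B : Set (Fin m → ℝ)} {K : Set (ℝ × (Fin m → ℝ))}
    (hsh : ∀ p ∈ K, p.2 ∈ B) (hKm : MeasurableSet K)
    (hfib : ∀ y ∈ B, {t : ℝ | (t, y) ∈ K} = Icc 0 (ht K y)) :
    volume K = ∫⁻ y, B.indicator (fun y => ENNReal.ofReal (ht K y)) y := by
  rw [show (volume : Measure (ℝ × (Fin m → ℝ))) = (volume : Measure ℝ).prod volume from
    Measure.volume_eq_prod ℝ (Fin m → ℝ), Measure.prod_apply_symm hKm]
  apply lintegral_congr
  intro y
  by_cases hy : y ∈ B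
  · have : (fun t : ℝ => ((t, y) : ℝ × (Fin m → ℝ))) ⁻¹' K = Icc 0 (ht K y) := hfib y hy
    rw [this, Set.indicator_of_mem hy, Real.volume_Icc, sub_zero]
  · have : (fun t : ℝ => ((t, y) : ℝ × (Fin m → ℝ))) ⁻¹' K = ∅ := by
      ext t
      simp only [Set.mem_preimage, Set.mem_empty_iff_false, iff_false]
      intro h
      exact hy (hsh _ h)
    rw [this, Set.indicator_of_notMem hy]
    simp

lemma oneD {I : Set ℝ} (hIo : IsOpen I) (hIc : Convex ℝ I) {p q : ℝ → ℝ} {l : ℝ}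
    (hl0 : 0 < l) (hl1 : l < 1)
    (hq : ConcaveOn ℝ I q) (hqc : ContinuousOn q I)
    (H : ∀ a ∈ I, ∀ b ∈ I, (1-l) * p a + l * q b
        ≤ (1-l) * p ((1-l)*a + l*b) + l * q ((1-l)*a + l*b))
    {c d : ℝ} (hc : c ∈ I) (hd : d ∈ I) (hcd : c < d) :
    p d - p c ≤ q d - q c := by
  obtain ⟨κ, hκdef⟩ : ∃ κ : ℝ, κ = (1-l)/l := ⟨_, rfl⟩
  have hκ : 0 < κ := hκdef ▸ div_pos (by linarith) hl0
  have hlκ : l * κ = 1 - l := by rw [hκdef]; field_simp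
  obtain ⟨M, hMκ, hM1⟩ : ∃ M : ℕ, κ + 2 ≤ (M:ℝ) ∧ (1:ℝ) ≤ (M:ℝ) := by
    refine ⟨⌈κ⌉₊ + 2, ?_, ?_⟩
    · push_cast; linarith [Nat.le_ceil κ]
    · have h0 : (0:ℝ) ≤ (⌈κ⌉₊:ℝ) := Nat.cast_nonneg _
      push_cast; linarith
  obtain ⟨η₀, hη₀, hball⟩ := Metric.isOpen_iff.1 hIo c hc
  obtain ⟨η, hηpos, hIcc⟩ : ∃ η > 0, Icc (c - η) d ⊆ I := by
    refine ⟨η₀/2, by positivity, fun x hx => ?_⟩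
    rcases le_or_gt c x with h | h
    · exact hIc.ordConnected.out hc hd ⟨h, hx.2⟩
    · apply hball
      rw [Metric.mem_ball, Real.dist_eq, abs_lt]
      constructor <;> [linarith [hx.1]; linarith]
  refine le_of_forall_pos_le_add ?_
  intro ε hε
  have hqcc : ContinuousAt q c := hqc.continuousAt (hIo.mem_nhds hc)
  have hqcd : ContinuousAt q d := hqc.continuousAt (hIo.mem_nhds hd)
  obtain ⟨δc, hδc, hqc'⟩ := Metric.continuousAt_iff.1 hqcc (ε/4) (by positivity)
  obtain ⟨δd, hδd, hqd'⟩ := Metric.continuousAt_iff.1 hqcd (ε/4) (by positivity)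
  obtain ⟨ρ, hρpos, hρη, hρc, hρd⟩ : ∃ ρ > 0, ρ ≤ η ∧ ρ ≤ δc ∧ ρ ≤ δd :=
    ⟨min η (min δc δd), lt_min hηpos (lt_min hδc hδd), min_le_left _ _,
      le_trans (min_le_right _ _) (min_le_left _ _),
      le_trans (min_le_right _ _) (min_le_right _ _)⟩
  obtain ⟨N, hN⟩ := exists_nat_gt ((M:ℝ) * (d - c) / ρ)
  have hNpos : 0 < (N:ℝ) := by
    refine lt_of_le_of_lt ?_ hN
    apply div_nonneg _ hρpos.le
    nlinarith
  obtain ⟨δ, hδdef⟩ : ∃ δ : ℝ, δ = (d - c)/N := ⟨_, rfl⟩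
  have hδpos : 0 < δ := hδdef ▸ div_pos (by linarith) hNpos
  have hNδ : (N:ℝ) * δ = d - c := by
    rw [hδdef]; field_simp
  have hMδ : (M:ℝ) * δ < ρ := by
    rw [div_lt_iff₀ hρpos] at hN
    by_contra hcon
    push_neg at hcon
    nlinarith
  -- key step
  have key : ∀ i : ℕ, i < N →
      p (c + (i:ℝ)*δ + δ) - p (c + (i:ℝ)*δ)
        ≤ q (c + (i:ℝ)*δ - ((M:ℝ)-1)*δ) - q (c + (i:ℝ)*δ - (M:ℝ)*δ) := by
    intro i hi
    have hiN : (i:ℝ) + 1 ≤ (N:ℝ) := by exact_mod_cast Nat.succ_le_of_lt hi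
    have hi0 : (0:ℝ) ≤ (i:ℝ) := by positivity
    have hxil : c ≤ c + (i:ℝ)*δ := by nlinarith
    have hxiu : c + (i:ℝ)*δ + δ ≤ d := by nlinarith
    generalize hxi : c + (i:ℝ)*δ = xi at hxil hxiu ⊢
    have hmem : ∀ z : ℝ, c - (M:ℝ)*δ ≤ z → z ≤ d → z ∈ I := fun z h1 h2 =>
      hIcc ⟨by linarith, h2⟩
    have hA : ((M:ℝ)-1)*δ = (M:ℝ)*δ - δ := by ring
    have hB : κ*δ ≤ (M:ℝ)*δ - 2*δ := by
      have := mul_le_mul_of_nonneg_right (show κ ≤ (M:ℝ) - 2 by linarith) hδpos.le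
      linarith [this, (by ring : ((M:ℝ) - 2)*δ = (M:ℝ)*δ - 2*δ)]
    have hC : 0 < κ*δ := by positivity
    have h12 : xi - (M:ℝ)*δ < xi - ((M:ℝ)-1)*δ := by linarith
    have h23 : xi - ((M:ℝ)-1)*δ < xi - κ*δ := by linarith
    have h34 : xi - κ*δ < xi := by linarith
    have hr1I : xi - (M:ℝ)*δ ∈ I := hmem _ (by linarith) (by linarith)
    have hr2I : xi - ((M:ℝ)-1)*δ ∈ I := hmem _ (by linarith) (by linarith)
    have hr3I : xi - κ*δ ∈ I := hmem _ (by linarith) (by linarith)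
    have hr4I : xi ∈ I := hmem _ (by linarith) (by linarith)
    have haI : xi + δ ∈ I := hmem _ (by linarith) hxiu
    have hcross : (1-l) * (p (xi + δ) - p xi) ≤ l * (q xi - q (xi - κ*δ)) := by
      have h := H (xi + δ) haI (xi - κ*δ) hr3I
      have hco : (1-l)*(xi + δ) + l*(xi - κ*δ) = xi := by
        rw [hκdef]; field_simp; ring
      rw [hco] at h
      linarith
    have hs1 : (q xi - q (xi - κ*δ)) / (xi - (xi - κ*δ))
        ≤ (q (xi - κ*δ) - q (xi - ((M:ℝ)-1)*δ)) / ((xi - κ*δ) - (xi - ((M:ℝ)-1)*δ)) :=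
      hq.slope_anti_adjacent hr2I hr4I h23 h34
    have hs2 : (q (xi - κ*δ) - q (xi - ((M:ℝ)-1)*δ)) / ((xi - κ*δ) - (xi - ((M:ℝ)-1)*δ))
        ≤ (q (xi - ((M:ℝ)-1)*δ) - q (xi - (M:ℝ)*δ)) / ((xi - ((M:ℝ)-1)*δ) - (xi - (M:ℝ)*δ)) :=
      hq.slope_anti_adjacent hr1I hr3I h12 h23
    have hs := le_trans hs1 hs2
    have hd34 : xi - (xi - κ*δ) = κ*δ := by ring
    have hd12 : (xi - ((M:ℝ)-1)*δ) - (xi - (M:ℝ)*δ) = δ := by ring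
    rw [hd34, hd12] at hs
    have hκδ : 0 < κ*δ := by positivity
    rw [div_le_div_iff₀ hκδ hδpos] at hs
    have h5 : l * ((q xi - q (xi - κ*δ)) * δ)
        ≤ (1-l) * ((q (xi - ((M:ℝ)-1)*δ) - q (xi - (M:ℝ)*δ)) * δ) := by
      calc l * ((q xi - q (xi - κ*δ)) * δ)
          ≤ l * ((q (xi - ((M:ℝ)-1)*δ) - q (xi - (M:ℝ)*δ)) * (κ*δ)) :=
            mul_le_mul_of_nonneg_left hs hl0.le
        _ = (l*κ) * ((q (xi - ((M:ℝ)-1)*δ) - q (xi - (M:ℝ)*δ)) * δ) := by ring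
        _ = (1-l) * ((q (xi - ((M:ℝ)-1)*δ) - q (xi - (M:ℝ)*δ)) * δ) := by rw [hlκ]
    have h6 : (1-l) * ((p (xi + δ) - p xi) * δ) ≤ l * ((q xi - q (xi - κ*δ)) * δ) := by
      nlinarith [mul_le_mul_of_nonneg_right hcross hδpos.le]
    have h7 := le_trans h6 h5
    nlinarith [h7, mul_pos (show (0:ℝ) < 1 - l by linarith) hδpos]
  -- telescoping
  have T1 : ∑ i ∈ Finset.range N, (p (c + (i:ℝ)*δ + δ) - p (c + (i:ℝ)*δ)) = p d - p c := by
    have : ∀ i ∈ Finset.range N, p (c + (i:ℝ)*δ + δ) - p (c + (i:ℝ)*δ)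
        = (fun j : ℕ => p (c + (j:ℝ)*δ)) (i+1) - (fun j : ℕ => p (c + (j:ℝ)*δ)) i := by
      intro i _
      simp only []
      congr 2
      push_cast; ring
    rw [Finset.sum_congr rfl this, Finset.sum_range_sub (fun j : ℕ => p (c + (j:ℝ)*δ))]
    have e1 : c + (N:ℝ)*δ = d := by linarith
    have e2 : c + ((0:ℕ):ℝ)*δ = c := by push_cast; ring
    rw [e1, e2]
  have T2 : ∑ i ∈ Finset.range N, (q (c + (i:ℝ)*δ - ((M:ℝ)-1)*δ) - q (c + (i:ℝ)*δ - (M:ℝ)*δ))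
      = q (d - (M:ℝ)*δ) - q (c - (M:ℝ)*δ) := by
    have : ∀ i ∈ Finset.range N, q (c + (i:ℝ)*δ - ((M:ℝ)-1)*δ) - q (c + (i:ℝ)*δ - (M:ℝ)*δ)
        = (fun j : ℕ => q (c + (j:ℝ)*δ - (M:ℝ)*δ)) (i+1)
          - (fun j : ℕ => q (c + (j:ℝ)*δ - (M:ℝ)*δ)) i := by
      intro i _
      simp only []
      congr 2
      push_cast; ring
    rw [Finset.sum_congr rfl this, Finset.sum_range_sub (fun j : ℕ => q (c + (j:ℝ)*δ - (M:ℝ)*δ))]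
    have e1 : c + (N:ℝ)*δ - (M:ℝ)*δ = d - (M:ℝ)*δ := by linarith
    have e2 : c + ((0:ℕ):ℝ)*δ - (M:ℝ)*δ = c - (M:ℝ)*δ := by push_cast; ring
    rw [e1, e2]
  have sumle : p d - p c ≤ q (d - (M:ℝ)*δ) - q (c - (M:ℝ)*δ) := by
    rw [← T1, ← T2]
    exact Finset.sum_le_sum fun i hi => key i (Finset.mem_range.1 hi)
  have hMδpos : 0 < (M:ℝ)*δ := by positivity
  have e1 : dist (d - (M:ℝ)*δ) d < δd := by
    rw [Real.dist_eq, abs_of_nonpos (by linarith), neg_sub]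
    linarith
  have e2 : dist (c - (M:ℝ)*δ) c < δc := by
    rw [Real.dist_eq, abs_of_nonpos (by linarith), neg_sub]
    linarith
  have b1 := hqd' e1
  have b2 := hqc' e2
  rw [Real.dist_eq, abs_lt] at b1 b2
  linarith

lemma slice_indicator_eq {B : Set (Fin m → ℝ)} {K : Set (ℝ × (Fin m → ℝ))}
    (hsh : ∀ p ∈ K, p.2 ∈ B)
    (hfib : ∀ y ∈ B, {t : ℝ | (t, y) ∈ K} = Icc 0 (ht K y)) :
    B.indicator (fun y => ENNReal.ofReal (ht K y))
      = fun y => volume ((fun t : ℝ => ((t, y) : ℝ × (Fin m → ℝ))) ⁻¹' K) := by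
  funext y
  by_cases hy : y ∈ B
  · have : (fun t : ℝ => ((t, y) : ℝ × (Fin m → ℝ))) ⁻¹' K = Icc 0 (ht K y) := hfib y hy
    rw [this, Set.indicator_of_mem hy, Real.volume_Icc, sub_zero]
  · have : (fun t : ℝ => ((t, y) : ℝ × (Fin m → ℝ))) ⁻¹' K = ∅ := by
      ext t
      simp only [Set.mem_preimage, Set.mem_empty_iff_false, iff_false]
      exact fun h => hy (hsh _ h)
    rw [this, Set.indicator_of_notMem hy]
    simp

lemma slice_indicator_measurable {B : Set (Fin m → ℝ)} {K : Set (ℝ × (Fin m → ℝ))}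
    (hsh : ∀ p ∈ K, p.2 ∈ B) (hKm : MeasurableSet K)
    (hfib : ∀ y ∈ B, {t : ℝ | (t, y) ∈ K} = Icc 0 (ht K y)) :
    Measurable (B.indicator (fun y => ENNReal.ofReal (ht K y))) := by
  rw [slice_indicator_eq hsh hfib]
  exact measurable_measure_prodMk_right hKm

theorem mainW (hm : 1 ≤ m) {B : Set (Fin m → ℝ)} (hBcp : IsCompact B)
    (hBconv : Convex ℝ B) (hBint : (interior B).Nonempty)
    {K₀ K₁ : Set (ℝ × (Fin m → ℝ))} (h0 : CapW B K₀) (h1 : CapW B K₁) (hne : K₀ ≠ K₁)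
    {l : ℝ} (hl0 : 0 < l) (hl1 : l < 1) :
    ENNReal.ofReal (1 - l) * volume K₀ + ENNReal.ofReal l * volume K₁
      < volume ((1 - l) • K₀ + l • K₁) := by
  obtain ⟨w, hw⟩ := hBint
  have hBcl : IsClosed B := hBcp.isClosed
  set S : Set (ℝ × (Fin m → ℝ)) := (1 - l) • K₀ + l • K₁ with hSdef
  have hl1' : (0:ℝ) < 1 - l := by linarith
  -- membership decomposition of S
  have hSmem : ∀ p : ℝ × (Fin m → ℝ), p ∈ S ↔
      ∃ a ∈ K₀, ∃ b ∈ K₁, (1-l) • a + l • b = p := by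
    intro p
    constructor
    · rintro ⟨a', ⟨a, ha, rfl⟩, b', ⟨b, hb, rfl⟩, rfl⟩
      exact ⟨a, ha, b, hb, rfl⟩
    · rintro ⟨a, ha, b, hb, rfl⟩
      exact Set.add_mem_add (Set.smul_mem_smul_set ha) (Set.smul_mem_smul_set hb)
  have hsh0 : ∀ p ∈ K₀, p.2 ∈ B := shadow h0 hBconv hBcl hw
  have hsh1 : ∀ p ∈ K₁, p.2 ∈ B := shadow h1 hBconv hBcl hw
  -- S is a cap
  have hScap : CapW B S := by
    refine ⟨?_, ?_, ?_, ?_, ?_, ?_⟩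
    · exact (h0.1.smul (1-l)).add (h1.1.smul l)
    · exact (h0.2.1.smul (1-l)).add (h1.2.1.smul l)
    · intro p hp
      obtain ⟨a, ha, b, hb, rfl⟩ := (hSmem p).1 hp
      have := h0.2.2.1 a ha
      have := h1.2.2.1 b hb
      have : ((1-l) • a + l • b).1 = (1-l) * a.1 + l * b.1 := rfl
      rw [this]
      nlinarith [h0.2.2.1 a ha, h1.2.2.1 b hb]
    · intro p hp hp1
      obtain ⟨a, ha, b, hb, rfl⟩ := (hSmem p).1 hp
      have h1' : ((1-l) • a + l • b).1 = (1-l) * a.1 + l * b.1 := rfl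
      have ha1 := h0.2.2.1 a ha
      have hb1 := h1.2.2.1 b hb
      rw [h1'] at hp1
      have ha0 : a.1 = 0 := by nlinarith
      have hb0 : b.1 = 0 := by nlinarith
      have h2' : ((1-l) • a + l • b).2 = (1-l) • a.2 + l • b.2 := rfl
      rw [h2']
      exact hBconv (h0.2.2.2.1 a ha ha0) (h1.2.2.2.1 b hb hb0) hl1'.le hl0.le (by ring)
    · intro y hy
      have h00 := h0.2.2.2.2.1 y hy
      have h01 := h1.2.2.2.2.1 y hy
      have := Set.add_mem_add (Set.smul_mem_smul_set (a := (1-l)) h00)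
        (Set.smul_mem_smul_set (a := l) h01)
      have heq : (1-l) • ((0:ℝ), y) + l • ((0:ℝ), y) = ((0:ℝ), y) := by
        rw [Prod.smul_mk, Prod.smul_mk, Prod.mk_add_mk, Prod.mk.injEq]
        refine ⟨by simp, ?_⟩
        rw [← add_smul]; norm_num
      rwa [heq] at this
    · intro y hy hyint t htmem
      obtain ⟨a, ha, b, hb, hab⟩ := (hSmem (t, y)).1 htmem
      obtain ⟨t₀, y₀⟩ := a
      obtain ⟨t₁, y₁⟩ := b
      have hy₀ : y₀ ∈ B := hsh0 _ ha
      have hy₁ : y₁ ∈ B := hsh1 _ hb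
      have haby : (1-l) • y₀ + l • y₁ = y := congrArg Prod.snd hab
      have habt : (1-l) * t₀ + l * t₁ = t := congrArg Prod.fst hab
      have hy₀int : y₀ ∉ interior B := by
        intro h
        exact hyint (haby ▸ hBconv.combo_interior_self_mem_interior h hy₁ hl1' hl0.le (by ring))
      have hy₁int : y₁ ∉ interior B := by
        intro h
        apply hyint
        have : l • y₁ + (1-l) • y₀ = y := by rw [← haby]; abel
        exact this ▸ hBconv.combo_interior_self_mem_interior h hy₀ hl0 hl1'.le (by ring)
      have e0 : t₀ = 0 := h0.2.2.2.2.2 y₀ hy₀ hy₀int t₀ ha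
      have e1 : t₁ = 0 := h1.2.2.2.2.2 y₁ hy₁ hy₁int t₁ hb
      rw [e0, e1] at habt
      linarith
  have hshS : ∀ p ∈ S, p.2 ∈ B := shadow hScap hBconv hBcl hw
  -- fibers
  have hfib0 := fun y (hy : y ∈ B) => fiber_eq h0 hy
  have hfib1 := fun y (hy : y ∈ B) => fiber_eq h1 hy
  have hfibS := fun y (hy : y ∈ B) => fiber_eq hScap hy
  -- measurability
  have hK0m : MeasurableSet K₀ := h0.1.isClosed.measurableSet
  have hK1m : MeasurableSet K₁ := h1.1.isClosed.measurableSet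
  have hSm : MeasurableSet S := hScap.1.isClosed.measurableSet
  have hF0 := slice_indicator_measurable hsh0 hK0m hfib0
  have hF1 := slice_indicator_measurable hsh1 hK1m hfib1
  have hFS := slice_indicator_measurable hshS hSm hfibS
  -- volume formulas
  have hv0 := volume_cap hsh0 hK0m hfib0
  have hv1 := volume_cap hsh1 hK1m hfib1
  have hvS := volume_cap hshS hSm hfibS
  -- the pointwise inequality avg ≤ ht S on B
  have havg : ∀ y ∈ B, (1-l) * ht K₀ y + l * ht K₁ y ≤ ht S y := by
    intro y hy
    have hmem0 := ht_mem h0 hy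
    have hmem1 := ht_mem h1 hy
    have hmemS : (((1-l) * ht K₀ y + l * ht K₁ y, y) : ℝ × (Fin m → ℝ)) ∈ S := by
      rw [hSmem]
      refine ⟨_, hmem0, _, hmem1, ?_⟩
      rw [Prod.smul_mk, Prod.smul_mk, Prod.mk_add_mk, Prod.mk.injEq]
      refine ⟨by simp [smul_eq_mul], ?_⟩
      rw [← add_smul]; norm_num
    have : ((1-l) * ht K₀ y + l * ht K₁ y) ∈ {t : ℝ | (t, y) ∈ S} := hmemS
    rw [hfibS y hy] at this
    exact this.2
  -- define the two relevant functions
  set Ff : (Fin m → ℝ) → ENNReal := B.indicator (fun y => ENNReal.ofReal (ht S y)) with hFf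
  set G : (Fin m → ℝ) → ENNReal :=
    B.indicator (fun y => ENNReal.ofReal ((1-l) * ht K₀ y + l * ht K₁ y)) with hG
  have hGmeas : Measurable G := by
    have : G = (fun y => ENNReal.ofReal (1-l) * B.indicator (fun y => ENNReal.ofReal (ht K₀ y)) y
        + ENNReal.ofReal l * B.indicator (fun y => ENNReal.ofReal (ht K₁ y)) y) := by
      funext y
      by_cases hy : y ∈ B
      · rw [hG, Set.indicator_of_mem hy, Set.indicator_of_mem hy, Set.indicator_of_mem hy,
          ← ENNReal.ofReal_mul hl1'.le, ← ENNReal.ofReal_mul hl0.le,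
          ENNReal.ofReal_add (by nlinarith [ht_nonneg h0 hy]) (by nlinarith [ht_nonneg h1 hy])]
      · rw [hG, Set.indicator_of_notMem hy, Set.indicator_of_notMem hy,
          Set.indicator_of_notMem hy]
        simp
    rw [this]
    exact ((hF0.const_mul _).add (hF1.const_mul _))
  have hGF : ∀ y, G y ≤ Ff y := by
    intro y
    by_cases hy : y ∈ B
    · rw [hG, hFf, Set.indicator_of_mem hy, Set.indicator_of_mem hy]
      exact ENNReal.ofReal_le_ofReal (havg y hy)
    · rw [hG, hFf, Set.indicator_of_notMem hy, Set.indicator_of_notMem hy]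
  -- RHS as an integral
  have hRHS : ENNReal.ofReal (1 - l) * volume K₀ + ENNReal.ofReal l * volume K₁
      = ∫⁻ y, G y := by
    rw [hv0, hv1, ← lintegral_const_mul _ hF0, ← lintegral_const_mul _ hF1,
      ← lintegral_add_left ((hF0.const_mul _)) ]
    apply lintegral_congr
    intro y
    by_cases hy : y ∈ B
    · rw [hG, Set.indicator_of_mem hy, Set.indicator_of_mem hy, Set.indicator_of_mem hy,
        ← ENNReal.ofReal_mul hl1'.le, ← ENNReal.ofReal_mul hl0.le,
        ENNReal.ofReal_add (by nlinarith [ht_nonneg h0 hy]) (by nlinarith [ht_nonneg h1 hy])]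
    · rw [hG, Set.indicator_of_notMem hy, Set.indicator_of_notMem hy,
        Set.indicator_of_notMem hy]
      simp
  have hGfin : ∫⁻ y, G y ≠ ⊤ := by
    rw [← hRHS]
    exact ENNReal.add_ne_top.2
      ⟨ENNReal.mul_ne_top ENNReal.ofReal_ne_top h0.1.measure_lt_top.ne,
       ENNReal.mul_ne_top ENNReal.ofReal_ne_top h1.1.measure_lt_top.ne⟩
  -- by contradiction
  by_contra hcon
  push_neg at hcon
  have hle : ∫⁻ y, Ff y ≤ ∫⁻ y, G y := by
    rw [← hvS, ← hRHS]
    exact hcon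
  have hzero : ∫⁻ y, (Ff y - G y) = 0 := by
    rw [lintegral_sub hGmeas hGfin (Filter.Eventually.of_forall hGF)]
    exact tsub_eq_zero_iff_le.2 hle
  have hae : ∀ᵐ y : (Fin m → ℝ), Ff y = G y := by
    have := (lintegral_eq_zero_iff (hFS.sub hGmeas)).1 hzero
    filter_upwards [this] with y hy
    have : Ff y - G y = 0 := hy
    exact le_antisymm (tsub_eq_zero_iff_le.1 this) (hGF y)
  -- continuity of f's on U
  set U := interior B with hU
  have hUo : IsOpen U := isOpen_interior
  have hUconv : Convex ℝ U := hBconv.interior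
  have hUB : U ⊆ B := interior_subset
  have hcc0 : ConcaveOn ℝ U (ht K₀) := ((ht_concave h0 hBconv).subset hUB hUconv)
  have hcc1 : ConcaveOn ℝ U (ht K₁) := ((ht_concave h1 hBconv).subset hUB hUconv)
  have hccS : ConcaveOn ℝ U (ht S) := ((ht_concave hScap hBconv).subset hUB hUconv)
  have hcont0 : ContinuousOn (ht K₀) U := hcc0.continuousOn hUo
  have hcont1 : ContinuousOn (ht K₁) U := hcc1.continuousOn hUo
  have hcontS : ContinuousOn (ht S) U := hccS.continuousOn hUo
  -- equality on U
  have hUeq : ∀ y ∈ U, ht S y = (1-l) * ht K₀ y + l * ht K₁ y := by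
    intro y hyU
    by_contra hne'
    have hlt : (1-l) * ht K₀ y + l * ht K₁ y < ht S y :=
      lt_of_le_of_ne (havg y (hUB hyU)) (Ne.symm hne')
    set g : (Fin m → ℝ) → ℝ := fun z => ht S z - ((1-l) * ht K₀ z + l * ht K₁ z) with hg
    have hgc : ContinuousOn g U := by
      apply hcontS.sub
      exact ((hcont0.const_smul (1-l)).add (hcont1.const_smul l))
    have hVopen : IsOpen (U ∩ g ⁻¹' (Ioi 0)) :=
      hgc.isOpen_inter_preimage hUo isOpen_Ioi
    have hVne : (U ∩ g ⁻¹' (Ioi 0)).Nonempty := ⟨y, hyU, by simp [hg]; linarith⟩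
    have hVpos : 0 < volume (U ∩ g ⁻¹' (Ioi 0)) := hVopen.measure_pos volume hVne
    have hVsub : (U ∩ g ⁻¹' (Ioi 0)) ⊆ {z | Ff z ≠ G z} := by
      rintro z ⟨hzU, hzg⟩
      have hzB := hUB hzU
      have hzlt : (1-l) * ht K₀ z + l * ht K₁ z < ht S z := by
        have h' : 0 < g z := hzg
        rw [hg] at h'
        simp only [] at h'
        linarith
      simp only [Set.mem_setOf_eq]
      rw [hFf, hG, Set.indicator_of_mem hzB, Set.indicator_of_mem hzB]
      intro hEq
      have h0le : 0 ≤ (1-l) * ht K₀ z + l * ht K₁ z := by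
        nlinarith [ht_nonneg h0 hzB, ht_nonneg h1 hzB]
      have := ENNReal.ofReal_eq_ofReal_iff (by linarith) h0le |>.1 hEq
      linarith
    have : volume {z | Ff z ≠ G z} = 0 := hae
    exact absurd (measure_mono_null hVsub this) (ne_of_gt hVpos)
  -- the sup-convolution inequality
  have star : ∀ y ∈ B, ∀ z ∈ B, (1-l) • y + l • z ∈ U →
      (1-l) * ht K₀ y + l * ht K₁ z
        ≤ (1-l) * ht K₀ ((1-l) • y + l • z) + l * ht K₁ ((1-l) • y + l • z) := by
    intro y hy z hz hwU
    have hmemS : (((1-l) * ht K₀ y + l * ht K₁ z, (1-l) • y + l • z) : ℝ × (Fin m → ℝ)) ∈ S := by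
      rw [hSmem]
      exact ⟨_, ht_mem h0 hy, _, ht_mem h1 hz, rfl⟩
    have : ((1-l) * ht K₀ y + l * ht K₁ z) ∈ {t : ℝ | (t, (1-l) • y + l • z) ∈ S} := hmemS
    rw [hfibS _ (hUB hwU)] at this
    calc (1-l) * ht K₀ y + l * ht K₁ z ≤ ht S ((1-l) • y + l • z) := this.2
      _ = (1-l) * ht K₀ ((1-l) • y + l • z) + l * ht K₁ ((1-l) • y + l • z) := hUeq _ hwU
  -- the difference of heights is constant on U
  have const : ∀ y ∈ U, ∀ z ∈ U, ht K₀ y - ht K₁ y = ht K₀ z - ht K₁ z := by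
    intro y hy z hz
    set γ : ℝ → (Fin m → ℝ) := fun s => y + s • (z - y) with hγ
    have hγ0 : γ 0 = y := by rw [hγ]; simp
    have hγ1 : γ 1 = z := by rw [hγ]; simp
    have hγcont : Continuous γ := continuous_const.add (continuous_id.smul continuous_const)
    have hcombo : ∀ a b s t : ℝ, a + b = 1 → γ (a*s + b*t) = a • γ s + b • γ t := by
      intro a b s t hab
      have h2 : a • γ s + b • γ t = (a+b) • y + (a*s + b*t) • (z - y) := by
        rw [hγ]; simp only []; module
      rw [h2, hab, one_smul, hγ]
    set I : Set ℝ := γ ⁻¹' U with hI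
    have hIo : IsOpen I := hUo.preimage hγcont
    have hIconv : Convex ℝ I := by
      intro s hs t ht' a b ha hb hab
      have hsU : γ s ∈ U := hs
      have htU : γ t ∈ U := ht'
      have : γ (a*s + b*t) ∈ U := by
        rw [hcombo a b s t hab]
        exact hUconv hsU htU ha hb hab
      exact this
    have h0I : (0:ℝ) ∈ I := by
      have : γ 0 ∈ U := by rw [hγ0]; exact hy
      exact this
    have h1I : (1:ℝ) ∈ I := by
      have : γ 1 ∈ U := by rw [hγ1]; exact hz
      exact this
    have hcomp : ∀ (f : (Fin m → ℝ) → ℝ), ConcaveOn ℝ U f → ConcaveOn ℝ I (f ∘ γ) := by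
      intro f hf
      refine ⟨hIconv, ?_⟩
      intro s hs t ht' a b ha hb hab
      have hsU : γ s ∈ U := hs
      have htU : γ t ∈ U := ht'
      have key := hf.2 hsU htU ha hb hab
      have he : (f ∘ γ) (a • s + b • t) = f (a • γ s + b • γ t) := by
        simp only [Function.comp_apply, smul_eq_mul]
        rw [hcombo a b s t hab]
      rw [he]
      simpa only [Function.comp_apply] using key
    have hcontc : ∀ (f : (Fin m → ℝ) → ℝ), ContinuousOn f U → ContinuousOn (f ∘ γ) I :=
      fun f hf => hf.comp hγcont.continuousOn (fun s hs => hs)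
    have H1 : ∀ a ∈ I, ∀ b ∈ I, (1-l) * (ht K₀ ∘ γ) a + l * (ht K₁ ∘ γ) b
        ≤ (1-l) * (ht K₀ ∘ γ) ((1-l)*a + l*b) + l * (ht K₁ ∘ γ) ((1-l)*a + l*b) := by
      intro a ha b hb
      have hab : γ ((1-l)*a + l*b) = (1-l) • γ a + l • γ b := hcombo _ _ _ _ (by ring)
      have hmem : (1-l) • γ a + l • γ b ∈ U := hUconv ha hb hl1'.le hl0.le (by ring)
      have hst := star (γ a) (hUB ha) (γ b) (hUB hb) hmem
      simp only [Function.comp_apply]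
      rw [hab]
      exact hst
    have R1 : (ht K₀ ∘ γ) 1 - (ht K₀ ∘ γ) 0 ≤ (ht K₁ ∘ γ) 1 - (ht K₁ ∘ γ) 0 :=
      oneD hIo hIconv hl0 hl1 (hcomp _ hcc1) (hcontc _ hcont1) H1 h0I h1I one_pos
    have H2 : ∀ a ∈ I, ∀ b ∈ I, (1-(1-l)) * (ht K₁ ∘ γ) a + (1-l) * (ht K₀ ∘ γ) b
        ≤ (1-(1-l)) * (ht K₁ ∘ γ) ((1-(1-l))*a + (1-l)*b)
          + (1-l) * (ht K₀ ∘ γ) ((1-(1-l))*a + (1-l)*b) := by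
      intro a ha b hb
      have he : (1-(1-l))*a + (1-l)*b = (1-l)*b + l*a := by ring
      have hab : γ ((1-l)*b + l*a) = (1-l) • γ b + l • γ a := hcombo _ _ _ _ (by ring)
      have hmem : (1-l) • γ b + l • γ a ∈ U := hUconv hb ha hl1'.le hl0.le (by ring)
      have hst := star (γ b) (hUB hb) (γ a) (hUB ha) hmem
      simp only [Function.comp_apply]
      rw [he, hab]
      have hll : 1 - (1-l) = l := by ring
      rw [hll]
      linarith
    have R2 : (ht K₁ ∘ γ) 1 - (ht K₁ ∘ γ) 0 ≤ (ht K₀ ∘ γ) 1 - (ht K₀ ∘ γ) 0 :=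
      oneD hIo hIconv (by linarith : (0:ℝ) < 1 - l) (by linarith : (1:ℝ) - l < 1)
        (hcomp _ hcc0) (hcontc _ hcont0) H2 h0I h1I one_pos
    simp only [Function.comp_apply, hγ0, hγ1] at R1 R2
    linarith
  -- a point of B outside U
  haveI : Nonempty (Fin m) := ⟨⟨0, hm⟩⟩
  obtain ⟨x, hxB, hxnotint⟩ : ∃ x, x ∈ B ∧ x ∉ U := by
    set v : Fin m → ℝ := fun _ => 1 with hv
    have hvnorm : ‖v‖ = 1 := by
      rw [hv, pi_norm_const (1:ℝ), norm_one]
    obtain ⟨r, hr⟩ := hBcp.isBounded.subset_closedBall 0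
    set A : Set ℝ := {s | 0 ≤ s ∧ w + s • v ∈ B} with hA
    have hAne : A.Nonempty := ⟨0, le_rfl, by simpa using hUB hw⟩
    have hAbdd : BddAbove A := by
      refine ⟨r + ‖w‖, fun s hs => ?_⟩
      have h1 := hr hs.2
      rw [Metric.mem_closedBall, dist_zero_right] at h1
      have h2 : ‖s • v‖ ≤ ‖w + s • v‖ + ‖w‖ := by
        calc ‖s • v‖ = ‖(w + s • v) - w‖ := by congr 1; abel
          _ ≤ ‖w + s • v‖ + ‖w‖ := norm_sub_le _ _
      rw [norm_smul, hvnorm, Real.norm_eq_abs, abs_of_nonneg hs.1, mul_one] at h2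
      linarith
    have hAcl : IsClosed A := by
      have : A = Ici (0:ℝ) ∩ ((fun s : ℝ => w + s • v) ⁻¹' B) := by
        ext s; simp [hA, Set.mem_Ici]
      rw [this]
      exact isClosed_Ici.inter (hBcl.preimage (continuous_const.add
        (continuous_id.smul continuous_const)))
    have hs'A : sSup A ∈ A := hAcl.csSup_mem hAne hAbdd
    refine ⟨w + (sSup A) • v, hs'A.2, fun hint => ?_⟩
    obtain ⟨ε, hε, hball⟩ := Metric.isOpen_iff.1 hUo _ hint
    have hmem2 : sSup A + ε/2 ∈ A := by
      refine ⟨by linarith [hs'A.1], hUB (hball ?_)⟩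
      rw [Metric.mem_ball, dist_eq_norm]
      have he : w + (sSup A + ε/2) • v - (w + (sSup A) • v) = (ε/2) • v := by module
      rw [he, norm_smul, hvnorm, Real.norm_eq_abs, abs_of_pos (by linarith), mul_one]
      linarith
    have := le_csSup hAbdd hmem2
    linarith
  -- the constant is zero
  have bnd : ∀ (K : Set (ℝ × (Fin m → ℝ))), CapW B K → ∀ c : ℝ,
      (∀ y ∈ U, c ≤ ht K y) → c ≤ 0 := by
    intro K hK c hc
    by_contra hcpos
    push_neg at hcpos
    set a : ℕ → ℝ := fun j => 1/((j:ℝ)+1) with ha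
    have haj : ∀ j : ℕ, 0 < a j ∧ a j ≤ 1 := by
      intro j
      constructor
      · rw [ha]; positivity
      · rw [ha]
        rw [div_le_one (by positivity)]
        have : (0:ℝ) ≤ (j:ℝ) := Nat.cast_nonneg j
        linarith
    set yseq : ℕ → (Fin m → ℝ) := fun j => (a j) • w + (1 - a j) • x with hyseq
    have hyU : ∀ j, yseq j ∈ U := fun j =>
      hBconv.combo_interior_self_mem_interior hw hxB (haj j).1 (by linarith [(haj j).2])
        (by ring)
    have hatend : Filter.Tendsto a Filter.atTop (nhds 0) :=
      tendsto_one_div_add_atTop_nhds_zero_nat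
    have hytend : Filter.Tendsto yseq Filter.atTop (nhds x) := by
      have h1 : Filter.Tendsto (fun j : ℕ => 1 - a j) Filter.atTop (nhds (1 - 0)) :=
        (tendsto_const_nhds : Filter.Tendsto (fun _ : ℕ => (1:ℝ)) Filter.atTop (nhds 1)).sub
          hatend
      have h2 := (hatend.smul_const w).add (h1.smul_const x)
      simpa using h2
    set P : ℕ → ℝ × (Fin m → ℝ) := fun j => (ht K (yseq j), yseq j) with hP
    have hPK : ∀ j, P j ∈ K := fun j => ht_mem hK (hUB (hyU j))
    obtain ⟨zpt, hz, φ, hφ, htend⟩ := hK.1.tendsto_subseq hPK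
    have h2 : Filter.Tendsto (fun k => (P (φ k)).2) Filter.atTop (nhds zpt.2) :=
      (continuous_snd.tendsto zpt).comp htend
    have h2' : Filter.Tendsto (fun k => (P (φ k)).2) Filter.atTop (nhds x) := by
      have := hytend.comp hφ.tendsto_atTop
      exact this
    have hz2 : zpt.2 = x := tendsto_nhds_unique h2 h2'
    have h3 : Filter.Tendsto (fun k => (P (φ k)).1) Filter.atTop (nhds zpt.1) :=
      (continuous_fst.tendsto zpt).comp htend
    have hge : c ≤ zpt.1 :=
      ge_of_tendsto h3 (Filter.Eventually.of_forall fun k => hc _ (hyU (φ k)))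
    have hmem3 : (zpt.1, x) ∈ K := by
      rw [← hz2]
      exact hz
    have := hK.2.2.2.2.2 x hxB hxnotint zpt.1 hmem3
    linarith
  have hUf : ∀ y ∈ U, ht K₀ y = ht K₁ y := by
    intro y hyU2
    have e1 : ht K₀ y - ht K₁ y = ht K₀ w - ht K₁ w := const y hyU2 w hw
    have hle1 : ht K₀ w - ht K₁ w ≤ 0 := by
      apply bnd K₀ h0
      intro z hzU
      have h5 := const z hzU w hw
      have h4 := ht_nonneg h1 (hUB hzU)
      linarith
    have hle2 : -(ht K₀ w - ht K₁ w) ≤ 0 := by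
      apply bnd K₁ h1
      intro z hzU
      have h5 := const z hzU w hw
      have h4 := ht_nonneg h0 (hUB hzU)
      linarith
    linarith
  have hBf : ∀ y ∈ B, ht K₀ y = ht K₁ y := by
    intro y hy
    by_cases hyU' : y ∈ U
    · exact hUf y hyU'
    · have e0 : ht K₀ y = 0 := h0.2.2.2.2.2 y hy hyU' _ (ht_mem h0 hy)
      have e1 : ht K₁ y = 0 := h1.2.2.2.2.2 y hy hyU' _ (ht_mem h1 hy)
      rw [e0, e1]
  apply hne
  ext p
  rw [mem_cap_iff h0 hsh0 p, mem_cap_iff h1 hsh1 p]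
  constructor
  · rintro ⟨hb, hp⟩; exact ⟨hb, by rwa [← hBf _ hb]⟩
  · rintro ⟨hb, hp⟩; exact ⟨hb, by rwa [hBf _ hb]⟩

end Stmt15Aux

namespace Stmt15Aux

/-- image of a set under a measure-preserving measurable equivalence has the same volume -/
lemma image_volume {α β : Type*} [MeasurableSpace α] [MeasurableSpace β]
    {μ : Measure α} {ν : Measure β} (e : α ≃ᵐ β) (h : MeasurePreserving e μ ν)
    (A : Set α) : ν (e '' A) = μ A := by
  rw [MeasurableEquiv.image_eq_preimage_symm]
  exact (h.symm e).measure_preimage_equiv A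

end Stmt15Aux


end Stmt15AuxSection

/-- The volume is strictly convex on the set of convex caps with the
same base: if `C₀ ≠ C₁` are convex caps based on the same compact convex set `D ⊆ u^⊥`
with nonempty interior relative to `u^⊥`, then for every `λ ∈ (0, 1)`,
`vol((1 − λ)•C₀ + λ•C₁) > (1 − λ)·vol C₀ + λ·vol C₁`. -/
theorem stmt15 (n : ℕ) (hn : 2 ≤ n) (u : EuclideanSpace ℝ (Fin n)) (hu : ‖u‖ = 1)
    (D : Set (EuclideanSpace ℝ (Fin n))) (hDcp : IsCompact D) (hDcv : Convex ℝ D)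
    (hDR : D ⊆ {x : EuclideanSpace ℝ (Fin n) | ⟪x, u⟫ = 0})
    (hDint : ∃ x ∈ D, ∃ ε > (0 : ℝ), ∀ y : EuclideanSpace ℝ (Fin n),
        ⟪y, u⟫ = 0 → ‖y - x‖ < ε → y ∈ D)
    (C₀ C₁ : Set (EuclideanSpace ℝ (Fin n)))
    (h0cap : IsConvexCap u D C₀) (h1cap : IsConvexCap u D C₁) (hne : C₀ ≠ C₁)
    (l : ℝ) (hl0 : 0 < l) (hl1 : l < 1) :
    ENNReal.ofReal (1 - l) * volume C₀ + ENNReal.ofReal l * volume C₁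
      < volume ((1 - l) • C₀ + l • C₁) := by
  classical
  obtain ⟨m, rfl⟩ : ∃ m, n = m + 1 := ⟨n - 1, by omega⟩
  have hm : 1 ≤ m := by omega
  -- an orthonormal basis with `b 0 = u`
  have hcard : Module.finrank ℝ (EuclideanSpace ℝ (Fin (m+1))) = Fintype.card (Fin (m+1)) := by
    simp [finrank_euclideanSpace]
  have horth : Orthonormal ℝ (({0} : Set (Fin (m+1))).restrict (fun _ => u)) := by
    constructor
    · intro i; exact hu
    · intro i j hij
      exact absurd (Subsingleton.elim i j) hij
  obtain ⟨b, hb⟩ := horth.exists_orthonormalBasis_extension_of_card_eq hcard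
  have hb0 : b 0 = u := hb 0 rfl
  set T : EuclideanSpace ℝ (Fin (m+1)) ≃ₗᵢ[ℝ] EuclideanSpace ℝ (Fin (m+1)) := b.repr with hT
  have hTu : T u = EuclideanSpace.single 0 1 := by
    rw [hT, ← hb0]
    exact b.repr_self 0
  -- the linear equivalence to `ℝ × (Fin m → ℝ)`
  set Φfun : EuclideanSpace ℝ (Fin (m+1)) → ℝ × (Fin m → ℝ) :=
    fun v => ((T v) 0, fun j => T v j.succ) with hΦfun
  set Ψfun : ℝ × (Fin m → ℝ) → EuclideanSpace ℝ (Fin (m+1)) :=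
    fun p => T.symm (WithLp.toLp 2 (Fin.cons p.1 p.2 : ∀ _ : Fin (m+1), ℝ) : EuclideanSpace ℝ (Fin (m+1)))
    with hΨfun
  have hΦΨ : ∀ p, Φfun (Ψfun p) = p := by
    intro p
    show ((T (T.symm (WithLp.toLp 2 (Fin.cons p.1 p.2 : ∀ _ : Fin (m+1), ℝ)))) 0, fun j : Fin m => (T (T.symm (WithLp.toLp 2 (Fin.cons p.1 p.2 : ∀ _ : Fin (m+1), ℝ)))) j.succ) = p
    rw [LinearIsometryEquiv.apply_symm_apply]
    exact Prod.ext (by simp) (funext fun j => by simp)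
  have hΨΦ : ∀ v, Ψfun (Φfun v) = v := by
    intro v
    show T.symm (WithLp.toLp 2 (Fin.cons ((T v) 0) (fun j => T v j.succ) : ∀ _ : Fin (m+1), ℝ) :
      EuclideanSpace ℝ (Fin (m+1))) = v
    have hcons : (WithLp.toLp 2 (Fin.cons ((T v) 0) (fun j => T v j.succ) : ∀ _ : Fin (m+1), ℝ) :
        EuclideanSpace ℝ (Fin (m+1))) = T v :=
      congrArg (WithLp.toLp 2) (Fin.cons_self_tail (T v).ofLp)
    rw [hcons]
    exact T.symm_apply_apply v
  have hΦadd : ∀ x y, Φfun (x + y) = Φfun x + Φfun y := by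
    intro x y
    show ((T (x+y)) 0, fun j : Fin m => T (x+y) j.succ)
      = ((T x) 0, fun j : Fin m => T x j.succ) + ((T y) 0, fun j : Fin m => T y j.succ)
    rw [map_add]
    exact Prod.ext (by simp [PiLp.add_apply]) (funext fun j => by simp [PiLp.add_apply])
  have hΦsmul : ∀ (c : ℝ) x, Φfun (c • x) = c • Φfun x := by
    intro c x
    show ((T (c • x)) 0, fun j : Fin m => T (c • x) j.succ)
      = c • ((T x) 0, fun j : Fin m => T x j.succ)
    rw [LinearIsometryEquiv.map_smul]
    exact Prod.ext (by simp [PiLp.smul_apply]) (funext fun j => by simp [PiLp.smul_apply])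
  set Φₗ : EuclideanSpace ℝ (Fin (m+1)) ≃ₗ[ℝ] ℝ × (Fin m → ℝ) :=
    { toFun := Φfun
      invFun := Ψfun
      left_inv := hΨΦ
      right_inv := hΦΨ
      map_add' := hΦadd
      map_smul' := hΦsmul } with hΦₗ
  set Φc : EuclideanSpace ℝ (Fin (m+1)) ≃L[ℝ] ℝ × (Fin m → ℝ) :=
    Φₗ.toContinuousLinearEquiv with hΦc
  have hΦc_apply : ∀ x, Φc x = Φfun x := fun _ => rfl
  have hΦc_symm_apply : ∀ p, Φc.symm p = Ψfun p := fun _ => rfl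
  -- measure preservation of Φfun images
  have hMP : ∀ A : Set (EuclideanSpace ℝ (Fin (m+1))), volume (Φfun '' A) = volume A := by
    intro A
    set e1 := (MeasurableEquiv.toLp 2 (Fin (m+1) → ℝ)).symm with he1
    set e2 := MeasurableEquiv.piFinSuccAbove (fun _ : Fin (m+1) => ℝ) 0 with he2
    set eT := T.toHomeomorph.toMeasurableEquiv with heT
    have hcomp : Φfun '' A = e2 '' (e1 '' (eT '' A)) := by
      rw [← Set.image_comp, ← Set.image_comp]
      apply Set.image_congr
      intro x _
      show Φfun x = e2 (e1 (eT x))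
      rfl
    rw [hcomp]
    rw [Stmt15Aux.image_volume e2 (volume_preserving_piFinSuccAbove (fun _ : Fin (m+1) => ℝ) 0) _]
    rw [Stmt15Aux.image_volume e1 (EuclideanSpace.volume_preserving_symm_measurableEquiv_toLp (Fin (m+1))) _]
    exact Stmt15Aux.image_volume eT T.measurePreserving A
  -- basic facts about Φfun
  have hΦu : Φfun u = ((1:ℝ), 0) := by
    show ((T u) 0, fun j : Fin m => T u j.succ) = ((1:ℝ), 0)
    rw [hTu]
    refine Prod.ext ?_ (funext fun j => ?_)
    · simp [EuclideanSpace.single_apply]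
    · simp [EuclideanSpace.single_apply, Fin.succ_ne_zero]
  have hinner : ∀ x : EuclideanSpace ℝ (Fin (m+1)), ⟪x, u⟫ = (Φfun x).1 := by
    intro x
    rw [← T.inner_map_map x u, hTu]
    rw [EuclideanSpace.inner_single_right]
    simp
    rfl
  -- the base set in hyperplane coordinates
  set B : Set (Fin m → ℝ) := {y | Ψfun ((0:ℝ), y) ∈ D} with hB
  have hΦcont : Continuous Φfun := by
    have h' : Φfun = ⇑Φc := funext fun x => (hΦc_apply x).symm
    rw [h']; exact Φc.continuous
  have hΨcont : Continuous Ψfun := by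
    have h' : Ψfun = ⇑Φc.symm := funext fun p => (hΦc_symm_apply p).symm
    rw [h']; exact Φc.symm.continuous
  have hΨ0cont : Continuous (fun y : Fin m → ℝ => Ψfun ((0:ℝ), y)) :=
    hΨcont.comp (Continuous.prodMk_right (0:ℝ))
  have hΨR : ∀ y : Fin m → ℝ, ⟪Ψfun ((0:ℝ), y), u⟫ = 0 := by
    intro y
    rw [hinner, hΦΨ]
  have hΦD : ∀ x ∈ D, Φfun x = ((0:ℝ), (Φfun x).2) := by
    intro x hx
    refine Prod.ext ?_ rfl
    rw [← hinner x]
    exact hDR hx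
  have hΨΦD : ∀ x ∈ D, Ψfun ((0:ℝ), (Φfun x).2) = x := by
    intro x hx
    rw [← hΦD x hx, hΨΦ]
  have hBeq : B = (fun x => (Φfun x).2) '' D := by
    ext y
    constructor
    · intro hy
      exact ⟨Ψfun ((0:ℝ), y), hy, congrArg Prod.snd (hΦΨ ((0:ℝ), y))⟩
    · rintro ⟨x, hx, rfl⟩
      show Ψfun ((0:ℝ), (Φfun x).2) ∈ D
      rw [hΨΦD x hx]
      exact hx
  have hBcp : IsCompact B := by
    rw [hBeq]
    exact hDcp.image (continuous_snd.comp hΦcont)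
  have hlin2 : IsLinearMap ℝ (fun x : EuclideanSpace ℝ (Fin (m+1)) => (Φfun x).2) :=
    ⟨fun x y => by rw [hΦadd]; rfl, fun c x => by rw [hΦsmul]; rfl⟩
  have hBcv : Convex ℝ B := by
    rw [hBeq]
    exact hDcv.is_linear_image hlin2
  -- interior of B is nonempty
  obtain ⟨x₀, hx₀D, ε, hε, hball⟩ := hDint
  have hints : (interior B).Nonempty := by
    refine ⟨(Φfun x₀).2, ?_⟩
    rw [mem_interior]
    refine ⟨{y | ‖Ψfun ((0:ℝ), y) - x₀‖ < ε}, fun y hy => hball _ (hΨR y) hy, ?_, ?_⟩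
    · have h' : {y : Fin m → ℝ | ‖Ψfun ((0:ℝ), y) - x₀‖ < ε}
          = (fun y : Fin m → ℝ => Ψfun ((0:ℝ), y)) ⁻¹' (Metric.ball x₀ ε) := by
        ext y; simp [Metric.mem_ball, dist_eq_norm]
      rw [h']
      exact Metric.isOpen_ball.preimage hΨ0cont
    · show ‖Ψfun ((0:ℝ), (Φfun x₀).2) - x₀‖ < ε
      rw [hΨΦD x₀ hx₀D]
      simpa using hε
  -- transported caps
  have hcapW : ∀ C : Set (EuclideanSpace ℝ (Fin (m+1))), IsConvexCap u D C →
      Stmt15Aux.CapW B (Φfun '' C) := by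
    intro C hC
    obtain ⟨hcp, hcv, hint', hhalf, hbase, hbd⟩ := hC
    have hDC : D ⊆ C := by
      rw [← hbase]; exact Set.inter_subset_left
    refine ⟨hcp.image hΦcont, hcv.is_linear_image ⟨hΦadd, hΦsmul⟩, ?_, ?_, ?_, ?_⟩
    · rintro p ⟨x, hx, rfl⟩
      have h' := hhalf hx
      rw [Set.mem_setOf_eq, hinner x] at h'
      exact h'
    · rintro p ⟨x, hx, rfl⟩ h1
      have hxD : x ∈ D := by
        rw [← hbase]
        exact ⟨hx, by rw [Set.mem_setOf_eq, hinner x]; exact h1⟩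
      show Ψfun ((0:ℝ), (Φfun x).2) ∈ D
      rw [hΨΦD x hxD]
      exact hxD
    · intro y hy
      have hxD : Ψfun ((0:ℝ), y) ∈ D := hy
      exact ⟨_, hDC hxD, hΦΨ ((0:ℝ), y)⟩
    · intro y hyB hynot t htm
      obtain ⟨x', hx', hx'eq⟩ := htm
      have hxD : Ψfun ((0:ℝ), y) ∈ D := hyB
      have hrel : ¬ ∃ ε' > (0:ℝ), ∀ z : EuclideanSpace ℝ (Fin (m+1)),
          ⟪z, u⟫ = 0 → ‖z - Ψfun ((0:ℝ), y)‖ < ε' → z ∈ D := by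
        rintro ⟨ε', hε', hb'⟩
        apply hynot
        rw [mem_interior]
        refine ⟨{y' | ‖Ψfun ((0:ℝ), y') - Ψfun ((0:ℝ), y)‖ < ε'},
          fun y' hy' => hb' _ (hΨR y') hy', ?_, ?_⟩
        · have h' : {y' : Fin m → ℝ | ‖Ψfun ((0:ℝ), y') - Ψfun ((0:ℝ), y)‖ < ε'}
              = (fun y' : Fin m → ℝ => Ψfun ((0:ℝ), y')) ⁻¹'
                (Metric.ball (Ψfun ((0:ℝ), y)) ε') := by
            ext y'; simp [Metric.mem_ball, dist_eq_norm]
          rw [h']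
          exact Metric.isOpen_ball.preimage hΨ0cont
        · show ‖Ψfun ((0:ℝ), y) - Ψfun ((0:ℝ), y)‖ < ε'
          simpa using hε'
      have hΦxt : Φfun (Ψfun ((0:ℝ), y) + t • u) = (t, y) := by
        rw [hΦadd, hΦsmul, hΦu, hΦΨ]
        refine Prod.ext (by simp) (by simp)
      have hx'' : x' = Ψfun ((0:ℝ), y) + t • u := by
        rw [← hΨΦ x', hx'eq, ← hΦxt, hΨΦ]
      exact hbd _ hxD hrel t (hx'' ▸ hx')
  -- Minkowski sum transport
  have hsum : Φfun '' ((1-l) • C₀ + l • C₁) = (1-l) • (Φfun '' C₀) + l • (Φfun '' C₁) := by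
    ext p
    constructor
    · rintro ⟨x, hx, rfl⟩
      obtain ⟨a', ⟨a, ha, rfl⟩, b', ⟨b, hb, rfl⟩, rfl⟩ := hx
      rw [hΦadd, hΦsmul, hΦsmul]
      exact Set.add_mem_add (Set.smul_mem_smul_set ⟨a, ha, rfl⟩)
        (Set.smul_mem_smul_set ⟨b, hb, rfl⟩)
    · rintro ⟨a', ⟨a'', ⟨a, ha, rfl⟩, rfl⟩, b', ⟨b'', ⟨b, hb, rfl⟩, rfl⟩, rfl⟩
      refine ⟨(1-l) • a + l • b,
        Set.add_mem_add (Set.smul_mem_smul_set ha) (Set.smul_mem_smul_set hb), ?_⟩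
      rw [hΦadd, hΦsmul, hΦsmul]
  have hneW : Φfun '' C₀ ≠ Φfun '' C₁ := by
    intro h
    apply hne
    have hinj : Function.Injective Φfun := fun a b hab => by rw [← hΨΦ a, hab, hΨΦ]
    exact Set.image_injective.2 hinj h
  have hmain := Stmt15Aux.mainW hm hBcp hBcv hints (hcapW C₀ h0cap) (hcapW C₁ h1cap)
    hneW hl0 hl1
  rw [← hMP C₀, ← hMP C₁, ← hMP ((1-l) • C₀ + l • C₁), hsum]
  exact hmain
end

section
/- Let O ⊆ ℝ^d be open, let (u_n) be a sequence of convex functions u_n : O → ℝ converging to a function u : O → ℝ uniformly on every compact subset of O. Let K and K' be compact subsets of O with K contained in the interior of K'. If u is L-Lipschitz on K' for some L ≥ 0, then for every ε > 0 there exists N such that for every n ≥ N the function u_n is (L + ε)-Lipschitz on K. Consequently limsup_n ‖u_n‖_{Lip(K)} ≤ ‖u‖_{Lip(K')}. -/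
open Filter

set_option maxHeartbeats 1000000 in
/-- Let `O ⊆ ℝ^d` be open, and let `(u_n)` be a sequence of convex
functions on `O` converging uniformly on every compact subset of `O` to `f`.  Let `K, K'`
be compact subsets of `O` with `K` contained in the interior of `K'`.  If `f` is
`L`-Lipschitz on `K'`, then for every `ε > 0`, for all sufficiently large `n` the
function `u_n` is `(L + ε)`-Lipschitz on `K`.  (Consequently
`limsup ‖u_n‖_{Lip(K)} ≤ ‖f‖_{Lip(K')}`.) -/
theorem stmt16 (d : ℕ) (O : Set (EuclideanSpace ℝ (Fin d))) (hO : IsOpen O)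
    (u : ℕ → EuclideanSpace ℝ (Fin d) → ℝ) (f : EuclideanSpace ℝ (Fin d) → ℝ)
    (hconv : ∀ n, ConvexOn ℝ O (u n))
    (hunif : ∀ C : Set (EuclideanSpace ℝ (Fin d)), C ⊆ O → IsCompact C →
        TendstoUniformlyOn u f atTop C)
    (K K' : Set (EuclideanSpace ℝ (Fin d))) (hK : IsCompact K) (hK' : IsCompact K')
    (hKK' : K ⊆ interior K') (hK'O : K' ⊆ O)
    (L : ℝ) (hL : 0 ≤ L)
    (hLip : ∀ x ∈ K', ∀ y ∈ K', |f x - f y| ≤ L * ‖x - y‖)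
    (ε : ℝ) (hε : 0 < ε) :
    ∃ N : ℕ, ∀ n ≥ N, ∀ x ∈ K, ∀ y ∈ K, |u n x - u n y| ≤ (L + ε) * ‖x - y‖ := by
  -- thickening of K inside K'
  obtain ⟨δ, hδpos, hδ⟩ := hK.exists_thickening_subset_open isOpen_interior hKK'
  set δ₀ : ℝ := δ / 2 with hδ₀def
  have hδ₀pos : 0 < δ₀ := by positivity
  have hball : ∀ y ∈ K, Metric.closedBall y δ₀ ⊆ K' := by
    intro y hy
    intro z hz
    apply interior_subset
    apply hδ
    rw [Metric.mem_thickening_iff]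
    exact ⟨y, hy, lt_of_le_of_lt (Metric.mem_closedBall.mp hz) (by rw [hδ₀def]; linarith)⟩
  have hKsub : K ⊆ K' := hKK'.trans interior_subset
  -- uniform approximation
  set η : ℝ := ε * δ₀ / 2 with hηdef
  have hηpos : 0 < η := by positivity
  have := (Metric.tendstoUniformlyOn_iff.mp (hunif K' hK'O hK')) η hηpos
  obtain ⟨N, hN⟩ := this.exists_forall_of_atTop
  refine ⟨N, fun n hn x hx y hy => ?_⟩
  have happrox : ∀ z ∈ K', |u n z - f z| ≤ η := by
    intro z hz
    have := hN n hn z hz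
    rw [Real.dist_eq] at this
    rw [abs_sub_comm]
    linarith [this.le]
  -- one-sided key estimate
  have key : ∀ x ∈ K, ∀ y ∈ K, u n y - u n x ≤ (L + ε) * ‖y - x‖ := by
    intro x hx y hy
    rcases eq_or_ne y x with rfl | hne
    · simp
    set r : ℝ := ‖y - x‖ with hrdef
    have hrpos : 0 < r := by
      rw [hrdef]
      simpa [sub_eq_zero] using hne
    set z : EuclideanSpace ℝ (Fin d) := y + (δ₀ / r) • (y - x) with hzdef
    have hzK' : z ∈ K' := by
      apply hball y hy
      rw [Metric.mem_closedBall, dist_eq_norm]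
      have : z - y = (δ₀ / r) • (y - x) := by rw [hzdef]; abel
      rw [this, norm_smul, Real.norm_eq_abs, abs_of_pos (by positivity)]
      rw [← hrdef]
      field_simp
      exact le_rfl
    have hzx : z - x = (1 + δ₀ / r) • (y - x) := by
      rw [hzdef]
      match_scalars <;> (field_simp; try ring)
    have hnormzx : ‖z - x‖ = r + δ₀ := by
      rw [hzx, norm_smul, Real.norm_eq_abs, abs_of_pos (by positivity), ← hrdef]
      field_simp
    -- convexity
    set a : ℝ := δ₀ / (r + δ₀) with hadef
    set b : ℝ := r / (r + δ₀) with hbdef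
    have hrδ : 0 < r + δ₀ := by positivity
    have ha : 0 ≤ a := by positivity
    have hb : 0 ≤ b := by positivity
    have hab : a + b = 1 := by rw [hadef, hbdef]; field_simp; ring
    have hyeq : a • x + b • z = y := by
      rw [hzdef, hadef, hbdef]
      match_scalars <;> (field_simp; try ring)
    have hconvineq := (hconv n).2 (hK'O (hKsub hx)) (hK'O hzK') ha hb hab
    rw [hyeq] at hconvineq
    simp only [smul_eq_mul] at hconvineq
    -- bound u n z - u n x
    have h1 : |f z - f x| ≤ L * ‖z - x‖ := hLip z hzK' x (hKsub hx)
    have h2 : |u n z - f z| ≤ η := happrox z hzK'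
    have h3 : |u n x - f x| ≤ η := happrox x (hKsub hx)
    have hzx_bound : u n z - u n x ≤ L * (r + δ₀) + 2 * η := by
      rw [← hnormzx]
      have := abs_le.mp h1
      have := abs_le.mp h2
      have := abs_le.mp h3
      nlinarith [abs_le.mp h1, abs_le.mp h2, abs_le.mp h3]
    have h2η : 2 * η ≤ ε * (r + δ₀) := by
      rw [hηdef]
      nlinarith
    have hfinal : u n z - u n x ≤ (L + ε) * (r + δ₀) := by
      have hring : L * (r + δ₀) + ε * (r + δ₀) = (L + ε) * (r + δ₀) := by ring
      linarith
    -- combine: u n y - u n x ≤ b * (u n z - u n x)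
    have hstep : u n y - u n x ≤ b * (u n z - u n x) := by
      have h4 : a * u n x = u n x - b * u n x := by
        rw [show a = 1 - b by linarith]; ring
      have h5 : b * (u n z - u n x) = b * u n z - b * u n x := mul_sub b _ _
      linarith
    have hbmul : b * (r + δ₀) = r := by rw [hbdef, div_mul_cancel₀ _ hrδ.ne']
    calc u n y - u n x ≤ b * (u n z - u n x) := hstep
      _ ≤ b * ((L + ε) * (r + δ₀)) := by
          apply mul_le_mul_of_nonneg_left hfinal hb
      _ = (L + ε) * r := by rw [mul_comm (L + ε), ← mul_assoc, hbmul, mul_comm]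
  rw [abs_sub_le_iff]
  constructor
  · exact key y hy x hx
  · rw [norm_sub_rev]
    exact key x hx y hy
end
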